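/- Let M and N be closed subspaces of a Hilbert space H. Then δ(M, N) = ‖(I − P_N) P_M‖, gap(M, N) = ‖P_M − P_N‖, and if gap(M, N) < 1 then gap(M, N) = δ(M, N) = δ(N, M). -/

import Mathlib

open Filter Topology Metric Submodule ContinuousLinearMap

/-- Orthogonal projection onto a subspace `K` (as an operator `H →L[ℝ] H`),
defined whenever `K` admits orthogonal projections (e.g. `K` closed). -/
noncomputable def orthProj {H : Type*} [NormedAddCommGroup H] [InnerProductSpace ℝ H]
    (K : Submodule ℝ H) : H →L[ℝ] H :=
  open scoped Classical in
  if h : HasOrthogonalProjection K then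
    haveI := h
    K.subtypeL.comp (orthogonalProjection K)
  else 0

/-- `δ(M,N) = sup {dist(x,N) : x ∈ M, ‖x‖ = 1}` (0 if `M = {0}`, as `sSup ∅ = 0` in `ℝ`). -/
noncomputable def deltaSub {H : Type*} [NormedAddCommGroup H] [InnerProductSpace ℝ H]
    (M N : Submodule ℝ H) : ℝ :=
  sSup {d : ℝ | ∃ x ∈ M, ‖x‖ = 1 ∧ d = Metric.infDist x (N : Set H)}

/-- The gap between two subspaces. -/
noncomputable def gapSub {H : Type*} [NormedAddCommGroup H] [InnerProductSpace ℝ H]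
    (M N : Submodule ℝ H) : ℝ :=
  max (deltaSub M N) (deltaSub N M)

open RealInnerProductSpace
section Aux
variable {H : Type*} [NormedAddCommGroup H] [InnerProductSpace ℝ H]

lemma orthProj_eq (K : Submodule ℝ H) [HasOrthogonalProjection K] :
    orthProj K = K.subtypeL.comp (orthogonalProjection K) := by
  rw [orthProj, dif_pos ‹_›]

lemma orthProj_mem (K : Submodule ℝ H) [HasOrthogonalProjection K] (x : H) :
    orthProj K x ∈ K := by rw [orthProj_eq]; exact (orthogonalProjection K x).2

lemma sub_orthProj_mem (K : Submodule ℝ H) [HasOrthogonalProjection K] (x : H) :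
    x - orthProj K x ∈ Kᗮ := by
  rw [orthProj_eq]; exact Submodule.sub_starProjection_mem_orthogonal (K := K) x

lemma orthProj_eq_self (K : Submodule ℝ H) [HasOrthogonalProjection K] {x : H} (hx : x ∈ K) :
    orthProj K x = x := by
  rw [orthProj_eq]; exact (Submodule.starProjection_eq_self_iff (K := K)).2 hx

lemma orthProj_eq_zero (K : Submodule ℝ H) [HasOrthogonalProjection K] {x : H} (hx : x ∈ Kᗮ) :
    orthProj K x = 0 := by
  rw [orthProj_eq]
  simp [orthogonalProjection_mem_subspace_orthogonalComplement_eq_zero hx]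

lemma inner_orthProj (K : Submodule ℝ H) [HasOrthogonalProjection K] (x y : H) :
    ⟪orthProj K x, y⟫ = ⟪x, orthProj K y⟫ := by
  rw [orthProj_eq]; exact Submodule.inner_starProjection_left_eq_right (K := K) x y

lemma pythag {u v : H} (h : ⟪u, v⟫ = 0) : ‖u + v‖ ^ 2 = ‖u‖ ^ 2 + ‖v‖ ^ 2 := by
  rw [norm_add_sq_real, h]; ring

lemma norm_sq_orthProj (K : Submodule ℝ H) [HasOrthogonalProjection K] (x : H) :
    ‖x‖ ^ 2 = ‖orthProj K x‖ ^ 2 + ‖x - orthProj K x‖ ^ 2 := by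
  have h : ⟪orthProj K x, x - orthProj K x⟫ = 0 :=
    Submodule.inner_right_of_mem_orthogonal (orthProj_mem K x) (sub_orthProj_mem K x)
  calc ‖x‖ ^ 2 = ‖orthProj K x + (x - orthProj K x)‖ ^ 2 := by rw [add_sub_cancel]
    _ = _ := pythag h

lemma norm_orthProj_le (K : Submodule ℝ H) [HasOrthogonalProjection K] (x : H) :
    ‖orthProj K x‖ ≤ ‖x‖ := by
  have := norm_sq_orthProj K x
  nlinarith [norm_nonneg (orthProj K x), norm_nonneg x, sq_nonneg ‖x - orthProj K x‖]

lemma opNorm_orthProj_le (K : Submodule ℝ H) : ‖orthProj K‖ ≤ 1 := by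
  by_cases h : HasOrthogonalProjection K
  · exact ContinuousLinearMap.opNorm_le_bound _ zero_le_one fun x => by
      simpa using norm_orthProj_le K x
  · rw [orthProj, dif_neg h]; simp

lemma infDist_eq_orthProj (K : Submodule ℝ H) [HasOrthogonalProjection K] (x : H) :
    Metric.infDist x (K : Set H) = ‖x - orthProj K x‖ := by
  apply le_antisymm
  · have := Metric.infDist_le_dist_of_mem (x := x) (orthProj_mem K x)
    rwa [dist_eq_norm] at this
  · rw [Metric.infDist_eq_iInf]
    have : Nonempty (K : Set H) := ⟨0, K.zero_mem⟩
    apply le_ciInf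
    intro v
    rw [dist_eq_norm]
    have hperp : ⟪x - orthProj K x, orthProj K x - (v : H)⟫ = 0 :=
      Submodule.inner_left_of_mem_orthogonal (K.sub_mem (orthProj_mem K x) v.2)
        (sub_orthProj_mem K x)
    have h2 : ‖x - (v : H)‖ ^ 2 = ‖x - orthProj K x‖ ^ 2 + ‖orthProj K x - (v : H)‖ ^ 2 := by
      calc ‖x - (v : H)‖ ^ 2 = ‖(x - orthProj K x) + (orthProj K x - (v : H))‖ ^ 2 := by
            rw [sub_add_sub_cancel]
        _ = _ := pythag hperp
    nlinarith [norm_nonneg (x - (v : H)), norm_nonneg (x - orthProj K x),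
      sq_nonneg ‖orthProj K x - (v : H)‖]
end Aux
section Aux2
variable {H : Type*} [NormedAddCommGroup H] [InnerProductSpace ℝ H]
variable (M N : Submodule ℝ H) [HasOrthogonalProjection M] [HasOrthogonalProjection N]

lemma deltaSet_bddAbove : BddAbove {d : ℝ | ∃ x ∈ M, ‖x‖ = 1 ∧ d = Metric.infDist x (N : Set H)} := by
  refine ⟨1, fun d hd => ?_⟩
  obtain ⟨x, hxM, hx1, rfl⟩ := hd
  have := Metric.infDist_le_dist_of_mem (x := x) N.zero_mem
  simpa [dist_eq_norm, hx1] using this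

lemma deltaSub_eq_norm : deltaSub M N = ‖(1 - orthProj N).comp (orthProj M)‖ := by
  set A := (1 - orthProj N).comp (orthProj M) with hA
  have hAx : ∀ x : H, A x = orthProj M x - orthProj N (orthProj M x) := by
    intro x; simp [hA, ContinuousLinearMap.sub_apply]
  apply le_antisymm
  · apply Real.sSup_le _ (norm_nonneg A)
    rintro d ⟨x, hxM, hx1, rfl⟩
    rw [infDist_eq_orthProj]
    have : x - orthProj N x = A x := by rw [hAx, orthProj_eq_self M hxM]
    rw [this]
    calc ‖A x‖ ≤ ‖A‖ * ‖x‖ := A.le_opNorm x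
      _ = ‖A‖ := by rw [hx1, mul_one]
  · have hd0 : 0 ≤ deltaSub M N :=
      Real.sSup_nonneg (by rintro d ⟨x, hxM, hx1, rfl⟩; exact Metric.infDist_nonneg)
    apply ContinuousLinearMap.opNorm_le_bound _ hd0
    intro y
    set m := orthProj M y with hm
    have hAy : A y = m - orthProj N m := hAx y
    by_cases hm0 : m = 0
    · rw [hAy, hm0]; simp [hd0, mul_nonneg hd0 (norm_nonneg y)]
    · set c := ‖m‖⁻¹ with hc
      have hc0 : 0 < c := by rw [hc]; exact inv_pos.2 (norm_pos_iff.2 hm0)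
      set x := c • m with hx
      have hxM : x ∈ M := M.smul_mem c (orthProj_mem M y)
      have hx1 : ‖x‖ = 1 := by
        rw [hx, norm_smul, hc, norm_inv, norm_norm, inv_mul_cancel₀ (norm_ne_zero_iff.2 hm0)]
      have hmem : Metric.infDist x (N : Set H) ≤ deltaSub M N :=
        le_csSup (deltaSet_bddAbove M N) ⟨x, hxM, hx1, rfl⟩
      have hdist : Metric.infDist x (N : Set H) = c * ‖A y‖ := by
        rw [infDist_eq_orthProj, hAy, hx, map_smul, ← smul_sub, norm_smul,
          Real.norm_eq_abs, abs_of_pos hc0]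
      have h1 : ‖A y‖ = ‖m‖ * Metric.infDist x (N : Set H) := by
        rw [hdist, hc, ← mul_assoc, mul_inv_cancel₀ (norm_ne_zero_iff.2 hm0), one_mul]
      rw [h1]
      have hmy : ‖m‖ ≤ ‖y‖ := norm_orthProj_le M y
      calc ‖m‖ * Metric.infDist x (N : Set H) ≤ ‖m‖ * deltaSub M N :=
            mul_le_mul_of_nonneg_left hmem (norm_nonneg m)
        _ ≤ ‖y‖ * deltaSub M N := mul_le_mul_of_nonneg_right hmy hd0
        _ = deltaSub M N * ‖y‖ := mul_comm _ _

lemma norm_apply_le_deltaSub {x : H} (hx : x ∈ M) :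
    ‖x - orthProj N x‖ ≤ deltaSub M N * ‖x‖ := by
  have : x - orthProj N x = ((1 - orthProj N).comp (orthProj M)) x := by
    simp [ContinuousLinearMap.sub_apply, orthProj_eq_self M hx]
  rw [this, deltaSub_eq_norm M N]
  exact ContinuousLinearMap.le_opNorm _ x
end Aux2
section Aux3
variable {H : Type*} [NormedAddCommGroup H] [InnerProductSpace ℝ H] [CompleteSpace H]
variable (M N : Submodule ℝ H) [CompleteSpace M] [CompleteSpace N]

lemma isSelfAdjoint_orthProj : IsSelfAdjoint (orthProj M) := by
  rw [orthProj_eq]; exact isSelfAdjoint_starProjection M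

set_option synthInstance.maxHeartbeats 1000000 in
lemma norm_comp_comm :
    ‖(orthProj N).comp (1 - orthProj M)‖ = ‖(1 - orthProj M).comp (orthProj N)‖ := by
  have h1 : IsSelfAdjoint (orthProj N) := isSelfAdjoint_orthProj N
  have h2 : IsSelfAdjoint (1 - orthProj M) :=
    (IsSelfAdjoint.one (R := H →L[ℝ] H)).sub (isSelfAdjoint_orthProj M)
  calc ‖(orthProj N).comp (1 - orthProj M)‖
      = ‖star ((orthProj N) * (1 - orthProj M))‖ := (norm_star _).symm
    _ = ‖star (1 - orthProj M) * star (orthProj N)‖ := by rw [star_mul]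
    _ = ‖(1 - orthProj M).comp (orthProj N)‖ := by rw [h1.star_eq, h2.star_eq]; rfl

lemma norm_orthProj_sub :
    ‖orthProj M - orthProj N‖ =
      max ‖(1 - orthProj N).comp (orthProj M)‖ ‖(1 - orthProj M).comp (orthProj N)‖ := by
  set A := (1 - orthProj N).comp (orthProj M) with hA
  set B := (1 - orthProj M).comp (orthProj N) with hB
  set c := max ‖A‖ ‖B‖ with hc
  have hc0 : 0 ≤ c := le_trans (norm_nonneg A) (le_max_left _ _)
  apply le_antisymm
  · apply ContinuousLinearMap.opNorm_le_bound _ hc0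
    intro x
    set u := orthProj M x - orthProj N (orthProj M x) with hu
    set w := x - orthProj M x with hw
    set v := orthProj N w with hv
    have hdecomp : (orthProj M - orthProj N) x = u - v := by
      simp only [ContinuousLinearMap.sub_apply, hu, hv, hw, map_sub]
      abel
    have huN : u ∈ Nᗮ := sub_orthProj_mem N (orthProj M x)
    have hvN : v ∈ N := orthProj_mem N w
    have huv : ⟪u, -v⟫ = 0 := by
      rw [inner_neg_right, Submodule.inner_left_of_mem_orthogonal hvN huN, neg_zero]
    have hsq : ‖u - v‖ ^ 2 = ‖u‖ ^ 2 + ‖v‖ ^ 2 := by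
      rw [sub_eq_add_neg, pythag huv, norm_neg]
    have hubd : ‖u‖ ≤ ‖A‖ * ‖orthProj M x‖ := by
      have : u = A (orthProj M x) := by
        simp [hA, hu, ContinuousLinearMap.sub_apply, orthProj_eq_self M (orthProj_mem M x)]
      rw [this]; exact A.le_opNorm _
    have hvbd : ‖v‖ ≤ ‖B‖ * ‖w‖ := by
      have hwM : w ∈ Mᗮ := sub_orthProj_mem M x
      have : v = ((orthProj N).comp (1 - orthProj M)) w := by
        simp [hv, ContinuousLinearMap.sub_apply, orthProj_eq_zero M hwM]
      rw [this, ← norm_comp_comm M N]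
      exact ContinuousLinearMap.le_opNorm _ _
    have hx : ‖x‖ ^ 2 = ‖orthProj M x‖ ^ 2 + ‖w‖ ^ 2 := norm_sq_orthProj M x
    have hA1 : ‖A‖ ≤ c := le_max_left _ _
    have hB1 : ‖B‖ ≤ c := le_max_right _ _
    have hu2 : ‖u‖ ≤ c * ‖orthProj M x‖ :=
      hubd.trans (mul_le_mul_of_nonneg_right hA1 (norm_nonneg _))
    have hv2 : ‖v‖ ≤ c * ‖w‖ := hvbd.trans (mul_le_mul_of_nonneg_right hB1 (norm_nonneg _))
    have hu3 : ‖u‖ ^ 2 ≤ c ^ 2 * ‖orthProj M x‖ ^ 2 := by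
      nlinarith [norm_nonneg u, mul_nonneg hc0 (norm_nonneg (orthProj M x))]
    have hv3 : ‖v‖ ^ 2 ≤ c ^ 2 * ‖w‖ ^ 2 := by
      nlinarith [norm_nonneg v, mul_nonneg hc0 (norm_nonneg w)]
    have key : ‖(orthProj M - orthProj N) x‖ ^ 2 ≤ c ^ 2 * ‖x‖ ^ 2 := by
      rw [hdecomp, hsq, hx]
      nlinarith
    nlinarith [norm_nonneg ((orthProj M - orthProj N) x), mul_nonneg hc0 (norm_nonneg x)]
  · apply max_le
    · have hAeq : A = (orthProj M - orthProj N).comp (orthProj M) := by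
        ext x
        simp [hA, ContinuousLinearMap.sub_apply, orthProj_eq_self M (orthProj_mem M x)]
      rw [hAeq]
      calc ‖(orthProj M - orthProj N).comp (orthProj M)‖
          ≤ ‖orthProj M - orthProj N‖ * ‖orthProj M‖ := ContinuousLinearMap.opNorm_comp_le _ _
        _ ≤ ‖orthProj M - orthProj N‖ * 1 :=
            mul_le_mul_of_nonneg_left (opNorm_orthProj_le M) (norm_nonneg _)
        _ = _ := mul_one _
    · have hBeq : B = (orthProj N - orthProj M).comp (orthProj N) := by
        ext x
        simp [hB, ContinuousLinearMap.sub_apply, orthProj_eq_self N (orthProj_mem N x)]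
      rw [hBeq]
      calc ‖(orthProj N - orthProj M).comp (orthProj N)‖
          ≤ ‖orthProj N - orthProj M‖ * ‖orthProj N‖ := ContinuousLinearMap.opNorm_comp_le _ _
        _ ≤ ‖orthProj N - orthProj M‖ * 1 :=
            mul_le_mul_of_nonneg_left (opNorm_orthProj_le N) (norm_nonneg _)
        _ = ‖orthProj N - orthProj M‖ := mul_one _
        _ = ‖orthProj M - orthProj N‖ := norm_sub_rev _ _
end Aux3
section Aux4
variable {H : Type*} [NormedAddCommGroup H] [InnerProductSpace ℝ H] [CompleteSpace H]

lemma deltaSub_nonneg (M N : Submodule ℝ H) : 0 ≤ deltaSub M N :=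
  Real.sSup_nonneg (by rintro d ⟨x, hxM, hx1, rfl⟩; exact Metric.infDist_nonneg)

set_option maxHeartbeats 1000000 in
lemma delta_antisymm (M N : Submodule ℝ H) (hM : IsClosed (M : Set H)) (hN : IsClosed (N : Set H))
    (ha : deltaSub M N < 1) (hb : deltaSub N M < 1) : deltaSub N M ≤ deltaSub M N := by
  haveI : CompleteSpace M := hM.completeSpace_coe
  haveI : CompleteSpace N := hN.completeSpace_coe
  set a := deltaSub M N with haa
  set b := deltaSub N M with hbb
  have ha0 : 0 ≤ a := deltaSub_nonneg M N
  have hb0 : 0 ≤ b := deltaSub_nonneg N M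
  set α := Real.sqrt (1 - a ^ 2) with hα
  set β := Real.sqrt (1 - b ^ 2) with hβ
  have hα0 : 0 < α := Real.sqrt_pos.2 (by nlinarith)
  have hβ0 : 0 < β := Real.sqrt_pos.2 (by nlinarith)
  have hα2 : α ^ 2 = 1 - a ^ 2 := Real.sq_sqrt (by nlinarith)
  have hβ2 : β ^ 2 = 1 - b ^ 2 := Real.sq_sqrt (by nlinarith)
  have F2 : ∀ x ∈ M, α * ‖x‖ ≤ ‖orthProj N x‖ := by
    intro x hx
    have h1 : ‖x - orthProj N x‖ ≤ a * ‖x‖ := norm_apply_le_deltaSub M N hx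
    have h2 := norm_sq_orthProj N x
    nlinarith [norm_nonneg (orthProj N x), mul_nonneg hα0.le (norm_nonneg x),
      norm_nonneg (x - orthProj N x), mul_nonneg ha0 (norm_nonneg x), norm_nonneg x]
  have F3 : ∀ y ∈ N, β * ‖y‖ ≤ ‖orthProj M y‖ := by
    intro y hy
    have h1 : ‖y - orthProj M y‖ ≤ b * ‖y‖ := norm_apply_le_deltaSub N M hy
    have h2 := norm_sq_orthProj M y
    nlinarith [norm_nonneg (orthProj M y), mul_nonneg hβ0.le (norm_nonneg y),
      norm_nonneg (y - orthProj M y), mul_nonneg hb0 (norm_nonneg y), norm_nonneg y]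
  -- surjectivity of the projection M → N
  have hsurj : ∀ z ∈ N, ∃ x ∈ M, orthProj N x = z := by
    set f : M →L[ℝ] H := (orthProj N).comp M.subtypeL with hf
    have hfx : ∀ x : M, f x = orthProj N (x : H) := fun x => rfl
    have hanti : AntilipschitzWith ⟨α, hα0.le⟩⁻¹ f := by
      apply f.antilipschitz_of_bound
      intro x
      change ‖x‖ ≤ α⁻¹ * ‖f x‖
      rw [hfx]
      have hx : ‖x‖ = ‖(x : H)‖ := rfl
      rw [hx, inv_mul_eq_div, le_div_iff₀ hα0, mul_comm]
      exact F2 (x : H) x.2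
    have hclosed : IsClosed (Set.range f) := hanti.isClosed_range f.uniformContinuous
    set K : Submodule ℝ H := Submodule.map (orthProj N : H →ₗ[ℝ] H) M with hK
    have hKrange : (K : Set H) = Set.range f := by
      ext z
      simp only [Submodule.mem_map, SetLike.mem_coe, Set.mem_range]
      constructor
      · rintro ⟨x, hx, rfl⟩; exact ⟨⟨x, hx⟩, rfl⟩
      · rintro ⟨x, rfl⟩; exact ⟨x, x.2, rfl⟩
    have hKclosed : IsClosed (K : Set H) := by rw [hKrange]; exact hclosed
    haveI : CompleteSpace K := hKclosed.completeSpace_coe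
    have hKN : K ≤ N := by
      intro z hz
      obtain ⟨x, hx, rfl⟩ := Submodule.mem_map.1 hz
      exact orthProj_mem N x
    intro z hz
    set w := z - orthProj K z with hw
    have hwK : w ∈ Kᗮ := sub_orthProj_mem K z
    have hwN : w ∈ N := N.sub_mem hz (hKN (orthProj_mem K z))
    have hwM : w ∈ Mᗮ := by
      intro x hx
      have hsplit : (x : H) = orthProj N x + (x - orthProj N x) := by abel
      have hmemK : orthProj N x ∈ K := Submodule.mem_map.2 ⟨x, hx, rfl⟩
      have h1 : ⟪orthProj N x, w⟫ = 0 :=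
        Submodule.inner_right_of_mem_orthogonal hmemK hwK
      have h2 : ⟪x - orthProj N x, w⟫ = 0 :=
        Submodule.inner_left_of_mem_orthogonal hwN (sub_orthProj_mem N x)
      calc ⟪x, w⟫ = ⟪orthProj N x + (x - orthProj N x), w⟫ := by rw [← hsplit]
        _ = ⟪orthProj N x, w⟫ + ⟪x - orthProj N x, w⟫ := inner_add_left _ _ _
        _ = 0 := by rw [h1, h2, add_zero]
    have hw0 : w = 0 := by
      have h1 : orthProj M w = 0 := orthProj_eq_zero M hwM
      have h2 := F3 w hwN
      rw [h1, norm_zero] at h2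
      have := mul_nonneg hβ0.le (norm_nonneg w)
      have : ‖w‖ = 0 := by nlinarith [norm_nonneg w]
      exact norm_eq_zero.1 this
    have : z = orthProj K z := by rw [← sub_eq_zero, ← hw, hw0]
    rw [this]
    obtain ⟨x, hx, hxz⟩ := Submodule.mem_map.1 (orthProj_mem K z)
    exact ⟨x, hx, hxz⟩
  -- conclude
  apply Real.sSup_le _ ha0
  rintro d ⟨y, hyN, hy1, rfl⟩
  obtain ⟨x, hxM, hxy⟩ := hsurj y hyN
  have hxnorm : α * ‖x‖ ≤ 1 := by
    have := F2 x hxM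
    rw [hxy, hy1] at this
    exact this
  have hinner : ⟪y, x⟫ = 1 := by
    have h1 : ⟪orthProj N x, x⟫ = ⟪orthProj N x, orthProj N x⟫ := by
      have h0 : ⟪orthProj N x, x - orthProj N x⟫ = 0 :=
        Submodule.inner_right_of_mem_orthogonal (orthProj_mem N x) (sub_orthProj_mem N x)
      have := inner_add_right (𝕜 := ℝ) (orthProj N x) (orthProj N x) (x - orthProj N x)
      simp only [add_sub_cancel] at this
      rw [this, h0, add_zero]
    rw [← hxy, h1, real_inner_self_eq_norm_sq, hxy, hy1]
    norm_num
  have hPMy : α ≤ ‖orthProj M y‖ := by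
    have h1 : ⟪orthProj M y, x⟫ = 1 := by
      have hsa : ⟪orthProj M y, x⟫ = ⟪y, orthProj M x⟫ := inner_orthProj M y x
      rw [hsa, orthProj_eq_self M hxM, hinner]
    have h2 : (1 : ℝ) ≤ ‖orthProj M y‖ * ‖x‖ := by
      calc (1:ℝ) = ⟪orthProj M y, x⟫ := h1.symm
        _ ≤ ‖orthProj M y‖ * ‖x‖ := real_inner_le_norm _ _
    nlinarith [norm_nonneg (orthProj M y), norm_nonneg x, hα0]
  have hdist : Metric.infDist y (M : Set H) = ‖y - orthProj M y‖ := infDist_eq_orthProj M y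
  rw [hdist]
  have h2 := norm_sq_orthProj M y
  rw [hy1] at h2
  nlinarith [norm_nonneg (y - orthProj M y), hα0, norm_nonneg (orthProj M y)]
end Aux4

/-- For closed subspaces `M, N`: `δ(M,N) = ‖(I − P_N)P_M‖`, `gap(M,N) = ‖P_M − P_N‖`,
and if `gap(M,N) < 1` then `gap(M,N) = δ(M,N) = δ(N,M)`. -/
theorem stmt13 {H : Type*} [NormedAddCommGroup H] [InnerProductSpace ℝ H] [CompleteSpace H]
    (M N : Submodule ℝ H) (hM : IsClosed (M : Set H)) (hN : IsClosed (N : Set H)) :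
    deltaSub M N = ‖(1 - orthProj N).comp (orthProj M)‖ ∧
    gapSub M N = ‖orthProj M - orthProj N‖ ∧
    (gapSub M N < 1 → gapSub M N = deltaSub M N ∧ deltaSub M N = deltaSub N M) := by
  haveI : CompleteSpace M := hM.completeSpace_coe
  haveI : CompleteSpace N := hN.completeSpace_coe
  have h1 : deltaSub M N = ‖(1 - orthProj N).comp (orthProj M)‖ := deltaSub_eq_norm M N
  have h1' : deltaSub N M = ‖(1 - orthProj M).comp (orthProj N)‖ := deltaSub_eq_norm N M
  have h2 : gapSub M N = ‖orthProj M - orthProj N‖ := by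
    rw [norm_orthProj_sub M N]
    simp only [gapSub, h1, h1']
  refine ⟨h1, h2, fun hgap => ?_⟩
  have hgap' : max (deltaSub M N) (deltaSub N M) < 1 := hgap
  have haN : deltaSub M N < 1 := lt_of_le_of_lt (le_max_left _ _) hgap'
  have hbN : deltaSub N M < 1 := lt_of_le_of_lt (le_max_right _ _) hgap'
  have heq : deltaSub M N = deltaSub N M :=
    le_antisymm (delta_antisymm N M hN hM hbN haN) (delta_antisymm M N hM hN haN hbN)
  refine ⟨?_, heq⟩
  show max (deltaSub M N) (deltaSub N M) = deltaSub M N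
  rw [heq, max_self]
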